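/- Let r ≥ 1 and let real numbers satisfy 0 = α_0 < β_1 < α_1 = (3+r)β_1 < β_2 < α_2 = (3+r)β_2 < ⋯ < β_r < α_r = (3+r)β_r < β_{r+1}. Then ℝ_+^{r+1} = Δ(β_{r+1}) ∪ ⋃_{j=0}^{r} ⋃_{Q} Δ_Q(α_j, β_{j+1}), where the inner union runs over all set partitions Q of {0,1,…,r} with at least two parts; that is, every s̄ ∈ ℝ_+^{r+1} either satisfies |s_i − s_j| ≤ β_{r+1} for all i,j, or lies in Δ_Q(α_j, β_{j+1}) for some 0 ≤ j ≤ r and some partition Q of {0,…,r} with |Q| ≥ 2. -/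

import Mathlib

noncomputable section

private lemma gaps_sum_le (u : ℕ → ℝ) (c : ℝ) {p q : ℕ} (hpq : p ≤ q)
    (h : ∀ n, p ≤ n → n < q → u (n + 1) - u n ≤ c) :
    u q - u p ≤ ((q - p : ℕ) : ℝ) * c := by
  induction q, hpq using Nat.le_induction with
  | base => simp
  | succ q hpq ih =>
    have h1 : u (q + 1) - u q ≤ c := h q hpq (by omega)
    have h2 : u q - u p ≤ ((q - p : ℕ) : ℝ) * c := ih (fun n hn hn' => h n hn (by omega))
    have h3 : ((q + 1 - p : ℕ) : ℝ) = ((q - p : ℕ) : ℝ) + 1 := by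
      have : q + 1 - p = (q - p) + 1 := by omega
      rw [this]; push_cast; ring
    rw [h3, add_mul, one_mul]; linarith

private lemma beta_mono (r : ℕ) (α β : ℕ → ℝ)
    (hchain₁ : ∀ j, j ≤ r → α j < β (j + 1))
    (hchain₂ : ∀ j, 1 ≤ j → j ≤ r → β j < α j) :
    ∀ a b, 1 ≤ a → a ≤ b → b ≤ r + 1 → β a ≤ β b := by
  intro a b ha hab hbr
  induction b, hab using Nat.le_induction with
  | base => exact le_rfl
  | succ b hab ih =>
    have hb1 : 1 ≤ b := le_trans ha hab
    have hbr' : b ≤ r := by omega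
    have e1 : β a ≤ β b := ih (by omega)
    have e2 : β b < β (b + 1) := lt_trans (hchain₂ b hb1 hbr') (hchain₁ b hbr')
    linarith

private lemma exists_good_level (r : ℕ) (hr : 1 ≤ r) (α β : ℕ → ℝ)
    (hα0 : α 0 = 0)
    (hαβ : ∀ j, 1 ≤ j → j ≤ r → α j = (3 + (r : ℝ)) * β j)
    (hchain₁ : ∀ j, j ≤ r → α j < β (j + 1))
    (hchain₂ : ∀ j, 1 ≤ j → j ≤ r → β j < α j)
    (u : ℕ → ℝ) (hu : Monotone u)
    (hbig : β (r + 1) < u r - u 0) :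
    ∃ j, j ≤ r ∧
      (∀ n, n < r → (u (n + 1) - u n ≤ (if j = 0 then (0 : ℝ) else β j) ∨
        β (j + 1) < u (n + 1) - u n)) ∧
      (∃ n, n < r ∧ β (j + 1) < u (n + 1) - u n) := by
  classical
  have hmono : ∀ a b, 1 ≤ a → a ≤ b → b ≤ r + 1 → β a ≤ β b :=
    beta_mono r α β hchain₁ hchain₂
  have hβ1 : 0 < β 1 := by
    have := hchain₁ 0 (by omega); rw [hα0] at this; exact this
  have hβr : 0 < β r := lt_of_lt_of_le hβ1 (hmono 1 r le_rfl hr (by omega))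
  have hfin : (r : ℝ) * β r < β (r + 1) := by
    have h1 : α r = (3 + (r : ℝ)) * β r := hαβ r hr le_rfl
    have h2 : α r < β (r + 1) := hchain₁ r le_rfl
    nlinarith
  have htot : ∀ c : ℝ, (∀ n, n < r → u (n + 1) - u n ≤ c) → u r - u 0 ≤ (r : ℝ) * c := by
    intro c hc
    have := gaps_sum_le u c (Nat.zero_le r) (fun n _ hn => hc n hn)
    simpa using this
  by_contra hcon
  push_neg at hcon
  set Bp : ℕ → Prop := fun j => ∃ n, n < r ∧ β (j + 1) < u (n + 1) - u n with hBp
  have hB0 : Bp 0 := by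
    by_contra h
    have h' : ∀ n, n < r → u (n + 1) - u n ≤ β 1 := by
      intro n hn
      by_contra hgt
      exact h ⟨n, hn, lt_of_not_ge hgt⟩
    have e1 := htot (β 1) h'
    have hb1r : β 1 ≤ β r := hmono 1 r le_rfl hr (by omega)
    have e2 : (r : ℝ) * β 1 ≤ (r : ℝ) * β r :=
      mul_le_mul_of_nonneg_left hb1r (by positivity)
    linarith
  set m : ℕ := Nat.findGreatest Bp r with hm
  have hml : m ≤ r := Nat.findGreatest_le r
  have hBm : Bp m := Nat.findGreatest_spec (Nat.zero_le r) hB0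
  obtain ⟨nb, hnbr, hnbgt⟩ := hBm
  -- each level j ≤ m has a "window" gap
  have hW : ∀ j, ∃ n, j ≤ m →
      (n < r ∧ (if j = 0 then (0 : ℝ) else β j) < u (n + 1) - u n ∧
        u (n + 1) - u n ≤ β (j + 1)) := by
    intro j
    by_cases hjm : j ≤ m
    · have hBj : Bp j :=
        ⟨nb, hnbr, lt_of_le_of_lt
          (hmono (j + 1) (m + 1) (by omega) (by omega) (by omega)) hnbgt⟩
      have hcj := hcon j (le_trans hjm hml)
      by_cases hD : ∀ n, n < r →
          (u (n + 1) - u n ≤ (if j = 0 then (0 : ℝ) else β j) ∨ β (j + 1) < u (n + 1) - u n)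
      · obtain ⟨n0, hn0, hgt0⟩ := hBj
        exact absurd (hcj hD n0 hn0) (not_le.mpr hgt0)
      · push_neg at hD
        obtain ⟨n, hn, h1, h2⟩ := hD
        exact ⟨n, fun _ => ⟨hn, h1, h2⟩⟩
    · exact ⟨0, fun h => absurd h hjm⟩
  choose k hk using hW
  have hkval : ∀ j, j ≤ m → u (k j + 1) - u (k j) ≤ β (j + 1) := fun j hj => (hk j hj).2.2
  have hkgt : ∀ j, j ≤ m → (if j = 0 then (0 : ℝ) else β j) < u (k j + 1) - u (k j) :=
    fun j hj => (hk j hj).2.1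
  have hnbne : ∀ j, j ≤ m → nb ≠ k j := by
    intro j hj hne
    have h1 : u (k j + 1) - u (k j) ≤ β (m + 1) :=
      le_trans (hkval j hj) (hmono (j + 1) (m + 1) (by omega) (by omega) (by omega))
    rw [← hne] at h1; linarith
  have hkinj : ∀ j j', j < j' → j' ≤ m → k j ≠ k j' := by
    intro j j' hjj' hj' hne
    have h1 : u (k j + 1) - u (k j) ≤ β (j + 1) := hkval j (by omega)
    have h2 : β j' < u (k j' + 1) - u (k j') := by
      have h := hkgt j' hj'
      rwa [if_neg (by omega : ¬ j' = 0)] at h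
    have h3 : β (j + 1) ≤ β j' := hmono (j + 1) j' (by omega) (by omega) (by omega)
    rw [hne] at h1; linarith
  -- cardinality: m + 2 ≤ r
  have hcard : m + 2 ≤ r := by
    have hinj : Set.InjOn k ↑(Finset.range (m + 1)) := by
      intro x hx y hy hxy
      simp only [Finset.coe_range, Set.mem_Iio] at hx hy
      rcases lt_trichotomy x y with h | h | h
      · exact absurd hxy (hkinj x y h (by omega))
      · exact h
      · exact absurd hxy.symm (hkinj y x h (by omega))
    have hsub : insert nb ((Finset.range (m + 1)).image k) ⊆ Finset.range r := by
      intro x hx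
      rcases Finset.mem_insert.mp hx with h | h
      · simpa [h] using hnbr
      · obtain ⟨j', hj', rfl⟩ := Finset.mem_image.mp h
        exact Finset.mem_range.mpr (hk j' (Nat.lt_succ_iff.mp (Finset.mem_range.mp hj'))).1
    have hnbmem : nb ∉ (Finset.range (m + 1)).image k := by
      intro h
      obtain ⟨j', hj', hj'e⟩ := Finset.mem_image.mp h
      exact hnbne j' (Nat.lt_succ_iff.mp (Finset.mem_range.mp hj')) hj'e.symm
    have h1 : (insert nb ((Finset.range (m + 1)).image k)).card = m + 2 := by
      rw [Finset.card_insert_of_notMem hnbmem, Finset.card_image_of_injOn hinj,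
        Finset.card_range]
    calc m + 2 = (insert nb ((Finset.range (m + 1)).image k)).card := h1.symm
      _ ≤ (Finset.range r).card := Finset.card_le_card hsub
      _ = r := Finset.card_range r
  -- maximality of m: all gaps are at most β (m + 2)
  have hnotB : ¬ Bp (m + 1) := Nat.findGreatest_is_greatest (n := r) (by omega) (by omega)
  have hall : ∀ n, n < r → u (n + 1) - u n ≤ β (m + 2) := by
    intro n hn
    by_contra hgt
    exact hnotB ⟨n, hn, lt_of_not_ge hgt⟩
  have e1 := htot (β (m + 2)) hall
  have hb2r : β (m + 2) ≤ β r := hmono (m + 2) r (by omega) (by omega) (by omega)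
  have e2 : (r : ℝ) * β (m + 2) ≤ (r : ℝ) * β r :=
    mul_le_mul_of_nonneg_left hb2r (by positivity)
  linarith

theorem decomposition_of_positive_orthant
    (r : ℕ) (hr : 1 ≤ r) (α β : ℕ → ℝ)
    (hα0 : α 0 = 0)
    (hαβ : ∀ j, 1 ≤ j → j ≤ r → α j = (3 + (r : ℝ)) * β j)
    (hchain₁ : ∀ j, j ≤ r → α j < β (j + 1))
    (hchain₂ : ∀ j, 1 ≤ j → j ≤ r → β j < α j) :
    ∀ s : Fin (r + 1) → ℝ, (∀ i, 0 ≤ s i) →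
      -- either s̄ ∈ Δ(β_{r+1})
      (∀ i j : Fin (r + 1), |s i - s j| ≤ β (r + 1)) ∨
      -- or s̄ ∈ Δ_Q(α_j, β_{j+1}) for some 0 ≤ j ≤ r and some partition Q with |Q| ≥ 2
      (∃ j : ℕ, j ≤ r ∧
        ∃ Q : Finpartition (Finset.univ : Finset (Fin (r + 1))),
          2 ≤ Q.parts.card ∧
          -- ρ^Q(s̄) ≤ α_j
          (∀ I ∈ Q.parts, ∀ i ∈ I, ∀ i' ∈ I, |s i - s i'| ≤ α j) ∧
          -- ρ_Q(s̄) > β_{j+1}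
          (∀ I ∈ Q.parts, ∀ J ∈ Q.parts, I ≠ J →
            ∀ i ∈ I, ∀ i' ∈ J, β (j + 1) < |s i - s i'|)) := by
  intro s hs
  classical
  by_cases hdiam : ∀ i j : Fin (r + 1), |s i - s j| ≤ β (r + 1)
  · exact Or.inl hdiam
  right
  push_neg at hdiam
  obtain ⟨a, b, hab⟩ := hdiam
  have hmono : ∀ a b, 1 ≤ a → a ≤ b → b ≤ r + 1 → β a ≤ β b :=
    beta_mono r α β hchain₁ hchain₂
  have hβ1 : 0 < β 1 := by
    have := hchain₁ 0 (by omega); rw [hα0] at this; exact this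
  set σ := Tuple.sort s with hσ
  have hmon : Monotone (s ∘ σ) := Tuple.monotone_sort s
  set u : ℕ → ℝ := fun n => (s ∘ σ) ⟨min n r, by omega⟩ with hu
  have humono : Monotone u := by
    intro x y hxy
    exact hmon (by simp only [Fin.mk_le_mk]; omega)
  set pos : Fin (r + 1) → ℕ := fun i => ((σ.symm i : Fin (r + 1)) : ℕ) with hpos
  have hposr : ∀ i, pos i ≤ r := fun i => Nat.lt_succ_iff.mp (σ.symm i).isLt
  have hval : ∀ i, u (pos i) = s i := by
    intro i
    have h1 : (⟨min (pos i) r, by omega⟩ : Fin (r + 1)) = σ.symm i := by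
      apply Fin.ext
      simp [Nat.min_eq_left (hposr i), hpos]
      exact hposr i
    simp only [hu, h1, Function.comp_apply, Equiv.apply_symm_apply]
  have hlow : ∀ i, u 0 ≤ s i := by
    intro i; rw [← hval i]; exact humono (Nat.zero_le _)
  have hhigh : ∀ i, s i ≤ u r := by
    intro i; rw [← hval i]; exact humono (hposr i)
  have hbig : β (r + 1) < u r - u 0 := by
    have h1 : |s a - s b| ≤ u r - u 0 := by
      rw [abs_sub_le_iff]
      constructor <;> [linarith [hhigh a, hlow b]; linarith [hhigh b, hlow a]]
    linarith
  obtain ⟨j, hjr, hdich, nb, hnbr, hnbcut⟩ :=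
    exists_good_level r hr α β hα0 hαβ hchain₁ hchain₂ u humono hbig
  set τ : ℝ := if j = 0 then 0 else β j with hτ
  have hτnn : 0 ≤ τ := by
    rw [hτ]
    by_cases h : j = 0
    · simp [h]
    · rw [if_neg h]
      exact le_of_lt (lt_of_lt_of_le hβ1 (hmono 1 j le_rfl (by omega) (by omega)))
  have hτα : (r : ℝ) * τ ≤ α j := by
    rw [hτ]
    by_cases h : j = 0
    · rw [if_pos h, h, hα0]; simp
    · rw [if_neg h]
      have h1 : 1 ≤ j := by omega
      have hβj : 0 < β j := lt_of_lt_of_le hβ1 (hmono 1 j le_rfl h1 (by omega))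
      rw [hαβ j h1 hjr]; nlinarith
  have hβj1 : 0 < β (j + 1) :=
    lt_of_lt_of_le hβ1 (hmono 1 (j + 1) le_rfl (by omega) (by omega))
  set cut : ℕ → Prop := fun n => β (j + 1) < u (n + 1) - u n with hcut
  set c : ℕ → ℕ := fun p => ((Finset.range p).filter cut).card with hc
  have hcmono : ∀ {p q : ℕ}, p ≤ q → c p ≤ c q := by
    intro p q h
    exact Finset.card_le_card (Finset.filter_subset_filter cut (Finset.range_subset_range.mpr h))
  have hclt : ∀ {p n q : ℕ}, p ≤ n → n < q → cut n → c p < c q := by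
    intro p n q h1 h2 hcn
    have e1 : c p ≤ c n := hcmono h1
    have e2 : c n < c (n + 1) := by
      apply Finset.card_lt_card
      constructor
      · exact Finset.filter_subset_filter cut (Finset.range_subset_range.mpr (by omega))
      · intro hsub
        have : n ∈ (Finset.range n).filter cut :=
          hsub (Finset.mem_filter.mpr ⟨Finset.mem_range.mpr (by omega), hcn⟩)
        simp at this
    have e3 : c (n + 1) ≤ c q := hcmono h2
    omega
  have hexcut : ∀ {p q : ℕ}, p ≤ q → c p < c q → ∃ n, p ≤ n ∧ n < q ∧ cut n := by
    intro p q hpq hlt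
    have hsub : (Finset.range p).filter cut ⊆ (Finset.range q).filter cut :=
      Finset.filter_subset_filter cut (Finset.range_subset_range.mpr hpq)
    have hss : (Finset.range p).filter cut ⊂ (Finset.range q).filter cut := by
      refine hsub.ssubset_of_ne (fun h => absurd ?_ (ne_of_lt hlt))
      show c p = c q
      simp only [hc]
      rw [h]
    obtain ⟨n, hn1, hn2⟩ := Finset.exists_of_ssubset hss
    rw [Finset.mem_filter, Finset.mem_range] at hn1
    refine ⟨n, ?_, hn1.1, hn1.2⟩
    by_contra h
    exact hn2 (Finset.mem_filter.mpr ⟨Finset.mem_range.mpr (by omega), hn1.2⟩)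
  set C : Fin (r + 1) → ℕ := fun i => c (pos i) with hC
  have hsame0 : ∀ i i' : Fin (r + 1), pos i ≤ pos i' → C i = C i' → |s i - s i'| ≤ α j := by
    intro i i' hpq hCeq
    have hs' : s i ≤ s i' := by
      rw [← hval i, ← hval i']; exact humono hpq
    rw [abs_sub_comm, abs_of_nonneg (by linarith)]
    rw [← hval i, ← hval i']
    have hnocut : ∀ n, pos i ≤ n → n < pos i' → u (n + 1) - u n ≤ τ := by
      intro n h1 h2
      have hncut : ¬ cut n := fun hcn => absurd hCeq (ne_of_lt (hclt h1 h2 hcn))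
      have hnr : n < r := lt_of_lt_of_le h2 (hposr i')
      rcases hdich n hnr with h | h
      · exact h
      · exact absurd h hncut
    have h1 := gaps_sum_le u τ hpq hnocut
    have h2 : ((pos i' - pos i : ℕ) : ℝ) ≤ (r : ℝ) := by
      have : pos i' - pos i ≤ r := by have := hposr i'; omega
      exact_mod_cast this
    have h3 : ((pos i' - pos i : ℕ) : ℝ) * τ ≤ (r : ℝ) * τ :=
      mul_le_mul_of_nonneg_right h2 hτnn
    linarith
  have hdiff0 : ∀ i i' : Fin (r + 1), pos i ≤ pos i' → C i ≠ C i' →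
      β (j + 1) < |s i - s i'| := by
    intro i i' hpq hCne
    have hlt : C i < C i' := lt_of_le_of_ne (hcmono hpq) hCne
    obtain ⟨n, h1, h2, hcn⟩ := hexcut hpq hlt
    have e1 : u (pos i) ≤ u n := humono h1
    have e2 : u (n + 1) ≤ u (pos i') := humono h2
    have hgap : β (j + 1) < u (n + 1) - u n := hcn
    have hs' : β (j + 1) < u (pos i') - u (pos i) := by linarith
    rw [hval i, hval i'] at hs'
    rw [abs_sub_comm, abs_of_nonneg (by linarith)]
    linarith
  set st : Setoid (Fin (r + 1)) := Setoid.ker C with hst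
  haveI : DecidableRel st.r := fun x y => decidable_of_iff (C x = C y) Iff.rfl
  set Q : Finpartition (Finset.univ : Finset (Fin (r + 1))) := Finpartition.ofSetoid st with hQ
  have hrel : ∀ x y : Fin (r + 1), y ∈ Q.part x ↔ C x = C y := by
    intro x y
    exact Finpartition.mem_part_ofSetoid_iff_rel
  have hCrel : ∀ (I : Finset (Fin (r + 1))), I ∈ Q.parts → ∀ i ∈ I, ∀ i' ∈ I, C i = C i' := by
    intro I hI i hi i' hi'
    have e : Q.part i = I := Q.part_eq_of_mem hI hi
    exact (hrel i i').mp (e ▸ hi')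
  refine ⟨j, hjr, Q, ?_, ?_, ?_⟩
  · -- at least two parts
    have hnb1 : nb < r + 1 := by omega
    have hnb2 : nb + 1 < r + 1 := by omega
    set x : Fin (r + 1) := σ ⟨nb, hnb1⟩ with hx
    set y : Fin (r + 1) := σ ⟨nb + 1, hnb2⟩ with hy
    have hpx : pos x = nb := by simp [hpos, hx, Equiv.symm_apply_apply]
    have hpy : pos y = nb + 1 := by simp [hpos, hy, Equiv.symm_apply_apply]
    have hCxy : C x ≠ C y := by
      have h1 : c nb < c (nb + 1) := hclt le_rfl (by omega) hnbcut
      have h2 : C x = c nb := by rw [hC]; simp only [hpx]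
      have h3 : C y = c (nb + 1) := by rw [hC]; simp only [hpy]
      omega
    have hne : Q.part x ≠ Q.part y := by
      intro h
      have : y ∈ Q.part x := h ▸ Q.mem_part (Finset.mem_univ y)
      exact hCxy ((hrel x y).mp this)
    exact Finset.one_lt_card.mpr
      ⟨Q.part x, Q.part_mem.mpr (Finset.mem_univ x), Q.part y, Q.part_mem.mpr (Finset.mem_univ y), hne⟩
  · -- within parts
    intro I hI i hi i' hi'
    have hCeq : C i = C i' := hCrel I hI i hi i' hi'
    rcases le_total (pos i) (pos i') with h | h
    · exact hsame0 i i' h hCeq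
    · rw [abs_sub_comm]; exact hsame0 i' i h hCeq.symm
  · -- across parts
    intro I hI J hJ hne i hi i' hi'
    have hCne : C i ≠ C i' := by
      intro h
      have hmem : i' ∈ Q.part i := (hrel i i').mpr h
      have e : Q.part i = I := Q.part_eq_of_mem hI hi
      exact hne (Q.eq_of_mem_parts hI hJ (e ▸ hmem) hi')
    rcases le_total (pos i) (pos i') with h | h
    · exact hdiff0 i i' h hCne
    · rw [abs_sub_comm]; exact hdiff0 i' i h (fun e => hCne e.symm)
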